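/- Let N ≥ 2, let n be a positive integer, let φ₁,…,φ_N : ℝ → ℝ be smooth, fix constants γ₁,…,γ_N ∈ ℝ, and define h : ℝ^N → ℝ by h(r) := Σ_{k=1}^N ∫_{γ_k}^{r_k} φ_k(s) Π_{m=1}^N (s − r_m)^n ds. Then at every point r with pairwise distinct coordinates, for all i ≠ j: ∂_i∂_j h = (−n/(r_i − r_j)) [∂_i h − ∂_j h]. That is, h solves the N-component Euler–Darboux–Poisson system ∂_{ij}h = (ε/(r^i − r^j))[∂_i h − ∂_j h] with ε = −n. -/

import Mathlib

open Real Set MeasureTheory Finset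

/-- Partial derivative of `f : (Fin N → ℝ) → ℝ` in the `i`-th coordinate at `r`. -/
noncomputable def pd {N : ℕ} (i : Fin N) (f : (Fin N → ℝ) → ℝ) (r : Fin N → ℝ) : ℝ :=
  deriv (fun s => f (Function.update r i s)) (r i)

lemma cont_prod {ι : Type*} (s : Finset ι) (c : ι → ℝ) (q : ℕ) :
    Continuous fun u : ℝ => ∏ m ∈ s, (u - c m) ^ q :=
  continuous_finset_prod s fun m _ => (continuous_id.sub continuous_const).pow q

lemma coeff_id (p m : ℕ) :
    (-1 : ℝ) ^ (m + (p + 1)) * ((p + 1).choose m) * ((p + 1 - m : ℕ) : ℝ)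
      = -((p : ℝ) + 1) * ((-1 : ℝ) ^ (m + p) * (p.choose m)) := by
  have hnat : (p + 1).choose m * (p + 1 - m) = (p + 1) * p.choose m := by
    rw [← Nat.choose_succ_right_eq, ← Nat.add_one_mul_choose_eq]
  have hr : ((p + 1).choose m : ℝ) * ((p + 1 - m : ℕ) : ℝ) = ((p : ℝ) + 1) * (p.choose m : ℝ) := by
    exact_mod_cast congrArg (Nat.cast (R := ℝ)) hnat
  have he : m + (p + 1) = (m + p) + 1 := by omega
  rw [he, pow_succ]
  linear_combination (-(-1 : ℝ) ^ (m + p)) * hr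

lemma expand {g : ℝ → ℝ} (hg : Continuous g) (a b y : ℝ) (q : ℕ) :
    (∫ u in a..b, g u * (u - y) ^ q)
      = ∑ m ∈ Finset.range (q + 1),
          ((-1 : ℝ) ^ (m + q) * (q.choose m) * y ^ (q - m)) * ∫ u in a..b, g u * u ^ m := by
  have h1 : Set.EqOn (fun u => g u * (u - y) ^ q)
      (fun u => ∑ m ∈ Finset.range (q + 1),
        ((-1 : ℝ) ^ (m + q) * (q.choose m) * y ^ (q - m)) * (g u * u ^ m)) (Set.uIcc a b) := by
    intro u _
    simp only [sub_pow, Finset.mul_sum]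
    exact Finset.sum_congr rfl fun m _ => by ring
  rw [intervalIntegral.integral_congr h1,
    intervalIntegral.integral_finset_sum (f := fun m u =>
      ((-1 : ℝ) ^ (m + q) * (q.choose m) * y ^ (q - m)) * (g u * u ^ m)) (fun m _ =>
      ((continuous_const.mul (hg.mul (continuous_pow m))).intervalIntegrable a b))]
  exact Finset.sum_congr rfl fun m _ => intervalIntegral.integral_const_mul _ _

lemma sum_deriv_eq (K : ℕ → ℝ) (p : ℕ) (x : ℝ) :
    ∑ m ∈ Finset.range (p + 2),
        ((-1 : ℝ) ^ (m + (p + 1)) * ((p + 1).choose m))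
          * (((p + 1 - m : ℕ) : ℝ) * x ^ (p + 1 - m - 1)) * K m
      = -((p : ℝ) + 1) * ∑ m ∈ Finset.range (p + 1),
          ((-1 : ℝ) ^ (m + p) * (p.choose m) * x ^ (p - m)) * K m := by
  rw [Finset.sum_range_succ, Finset.mul_sum]
  simp only [Nat.sub_self, Nat.cast_zero, zero_mul, mul_zero, add_zero]
  apply Finset.sum_congr rfl
  intro m hm
  have hm' : m ≤ p := by simpa using Nat.lt_succ_iff.mp (Finset.mem_range.mp hm)
  have he : p + 1 - m - 1 = p - m := by omega
  rw [he]
  linear_combination (x ^ (p - m) * K m) * coeff_id p m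

lemma lemB {g : ℝ → ℝ} (hg : Continuous g) (a b : ℝ) (p : ℕ) (x : ℝ) :
    HasDerivAt (fun y => ∫ u in a..b, g u * (u - y) ^ (p + 1))
      (-((p : ℝ) + 1) * ∫ u in a..b, g u * (u - x) ^ p) x := by
  have hfun : (fun y => ∫ u in a..b, g u * (u - y) ^ (p + 1))
      = fun y => ∑ m ∈ Finset.range (p + 2),
          ((-1 : ℝ) ^ (m + (p + 1)) * ((p + 1).choose m)) * y ^ (p + 1 - m)
            * ∫ u in a..b, g u * u ^ m := by
    funext y
    rw [expand hg a b y (p + 1)]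
  rw [hfun]
  have hD : HasDerivAt (fun y => ∑ m ∈ Finset.range (p + 2),
        ((-1 : ℝ) ^ (m + (p + 1)) * ((p + 1).choose m)) * y ^ (p + 1 - m)
          * ∫ u in a..b, g u * u ^ m)
      (∑ m ∈ Finset.range (p + 2),
        ((-1 : ℝ) ^ (m + (p + 1)) * ((p + 1).choose m))
          * (((p + 1 - m : ℕ) : ℝ) * x ^ (p + 1 - m - 1)) * ∫ u in a..b, g u * u ^ m) x := by
    apply HasDerivAt.fun_sum
    intro m _
    exact ((hasDerivAt_pow (p + 1 - m) x).const_mul _).mul_const _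
  have heq : -((p : ℝ) + 1) * (∫ u in a..b, g u * (u - x) ^ p)
      = ∑ m ∈ Finset.range (p + 2),
        ((-1 : ℝ) ^ (m + (p + 1)) * ((p + 1).choose m))
          * (((p + 1 - m : ℕ) : ℝ) * x ^ (p + 1 - m - 1)) * ∫ u in a..b, g u * u ^ m := by
    rw [sum_deriv_eq (fun m => ∫ u in a..b, g u * u ^ m) p x, expand hg a b x p]
  rw [heq]
  exact hD

lemma lemA {g : ℝ → ℝ} (hg : Continuous g) (a : ℝ) (p : ℕ) (x : ℝ) :
    HasDerivAt (fun y => ∫ u in a..y, g u * (u - y) ^ (p + 1))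
      (-((p : ℝ) + 1) * ∫ u in a..x, g u * (u - x) ^ p) x := by
  have hfun : (fun y => ∫ u in a..y, g u * (u - y) ^ (p + 1))
      = fun y => ∑ m ∈ Finset.range (p + 2),
          ((-1 : ℝ) ^ (m + (p + 1)) * ((p + 1).choose m)) * (y ^ (p + 1 - m)
            * ∫ u in a..y, g u * u ^ m) := by
    funext y
    rw [expand hg a y y (p + 1)]
    exact Finset.sum_congr rfl fun m _ => by ring
  rw [hfun]
  have hD : HasDerivAt (fun y => ∑ m ∈ Finset.range (p + 2),
        ((-1 : ℝ) ^ (m + (p + 1)) * ((p + 1).choose m)) * (y ^ (p + 1 - m)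
          * ∫ u in a..y, g u * u ^ m))
      (∑ m ∈ Finset.range (p + 2),
        ((-1 : ℝ) ^ (m + (p + 1)) * ((p + 1).choose m))
          * ((((p + 1 - m : ℕ) : ℝ) * x ^ (p + 1 - m - 1)) * (∫ u in a..x, g u * u ^ m)
              + x ^ (p + 1 - m) * (g x * x ^ m))) x := by
    apply HasDerivAt.fun_sum
    intro m _
    have hI : HasDerivAt (fun y => ∫ u in a..y, g u * u ^ m) (g x * x ^ m) x :=
      intervalIntegral.integral_hasDerivAt_right
        ((hg.mul (continuous_pow m)).intervalIntegrable a x)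
        (hg.mul (continuous_pow m)).stronglyMeasurable.stronglyMeasurableAtFilter
        (hg.mul (continuous_pow m)).continuousAt
    exact ((hasDerivAt_pow (p + 1 - m) x).mul hI).const_mul _
  convert hD using 1
  have hsplit : ∑ m ∈ Finset.range (p + 2),
        ((-1 : ℝ) ^ (m + (p + 1)) * ((p + 1).choose m))
          * ((((p + 1 - m : ℕ) : ℝ) * x ^ (p + 1 - m - 1)) * (∫ u in a..x, g u * u ^ m)
              + x ^ (p + 1 - m) * (g x * x ^ m))
      = (∑ m ∈ Finset.range (p + 2),
          ((-1 : ℝ) ^ (m + (p + 1)) * ((p + 1).choose m))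
            * (((p + 1 - m : ℕ) : ℝ) * x ^ (p + 1 - m - 1)) * (∫ u in a..x, g u * u ^ m))
        + ∑ m ∈ Finset.range (p + 2),
            ((-1 : ℝ) ^ (m + (p + 1)) * ((p + 1).choose m))
              * (x ^ (p + 1 - m) * (g x * x ^ m)) := by
    rw [← Finset.sum_add_distrib]
    exact Finset.sum_congr rfl fun m _ => by ring
  have hzero : ∑ m ∈ Finset.range (p + 2),
      ((-1 : ℝ) ^ (m + (p + 1)) * ((p + 1).choose m))
        * (x ^ (p + 1 - m) * (g x * x ^ m)) = 0 := by
    have h2 : ∑ m ∈ Finset.range (p + 2),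
        ((-1 : ℝ) ^ (m + (p + 1)) * ((p + 1).choose m)) * (x ^ (p + 1 - m) * (g x * x ^ m))
        = g x * ∑ m ∈ Finset.range (p + 1 + 1),
            (-1 : ℝ) ^ (m + (p + 1)) * x ^ m * x ^ (p + 1 - m) * ((p + 1).choose m) := by
      rw [Finset.mul_sum]
      exact Finset.sum_congr rfl fun m _ => by ring
    rw [h2, ← sub_pow x x (p + 1)]
    simp
  rw [hsplit, hzero, add_zero, sum_deriv_eq (fun m => ∫ u in a..x, g u * u ^ m) p x,
    expand hg a x x p]

lemma pd_h (N : ℕ) (p : ℕ) (φ : Fin N → ℝ → ℝ) (hφ : ∀ k, Continuous (φ k))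
    (γ : Fin N → ℝ) (h : (Fin N → ℝ) → ℝ)
    (hh : ∀ rr : Fin N → ℝ,
      h rr = ∑ k, ∫ s in (γ k)..(rr k), φ k s * ∏ m, (s - rr m) ^ (p + 1))
    (j : Fin N) (r : Fin N → ℝ) :
    pd j h r = -((p : ℝ) + 1) * ∑ k, ∫ u in (γ k)..(r k),
        (φ k u * ∏ m ∈ Finset.univ.erase j, (u - r m) ^ (p + 1)) * (u - r j) ^ p := by
  have hG : ∀ k : Fin N, Continuous fun u =>
      φ k u * ∏ m ∈ Finset.univ.erase j, (u - r m) ^ (p + 1) :=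
    fun k => (hφ k).mul (cont_prod _ _ _)
  have hrw : (fun s => h (Function.update r j s))
      = fun s => ∑ k, ∫ u in (γ k)..(Function.update r j s k),
          (φ k u * ∏ m ∈ Finset.univ.erase j, (u - r m) ^ (p + 1)) * (u - s) ^ (p + 1) := by
    funext s
    rw [hh]
    apply Finset.sum_congr rfl
    intro k _
    apply intervalIntegral.integral_congr
    intro u _
    have hp : ∏ m, (u - Function.update r j s m) ^ (p + 1)
        = (u - s) ^ (p + 1) * ∏ m ∈ Finset.univ.erase j, (u - r m) ^ (p + 1) := by
      rw [← Finset.mul_prod_erase Finset.univ _ (Finset.mem_univ j), Function.update_self]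
      congr 1
      apply Finset.prod_congr rfl
      intro m hm
      rw [Function.update_of_ne (Finset.ne_of_mem_erase hm)]
    simp only [hp]
    ring
  have hD : HasDerivAt (fun s => ∑ k, ∫ u in (γ k)..(Function.update r j s k),
        (φ k u * ∏ m ∈ Finset.univ.erase j, (u - r m) ^ (p + 1)) * (u - s) ^ (p + 1))
      (∑ k, -((p : ℝ) + 1) * ∫ u in (γ k)..(r k),
        (φ k u * ∏ m ∈ Finset.univ.erase j, (u - r m) ^ (p + 1)) * (u - r j) ^ p) (r j) := by
    apply HasDerivAt.fun_sum
    intro k _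
    by_cases hk : k = j
    · subst hk
      simp only [Function.update_self]
      exact lemA (hG k) (γ k) p (r k)
    · simp only [Function.update_of_ne hk]
      exact lemB (hG k) (γ k) (r k) p (r j)
  unfold pd
  rw [hrw, hD.deriv, Finset.mul_sum]

/-- The function `h(r) = Σ_k ∫_{γ_k}^{r_k} φ_k(s) Π_m (s − r_m)^n ds` solves the
N-component Euler–Darboux–Poisson system
`∂ᵢ∂ⱼ h = (−n/(rᵢ − rⱼ))[∂ᵢ h − ∂ⱼ h]` (ε = −n) at points with pairwise
distinct coordinates. -/
theorem euler_darboux_poisson_negative_integer_solution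
    (N : ℕ) (hN : 2 ≤ N) (n : ℕ) (hn : 0 < n)
    (φ : Fin N → ℝ → ℝ) (hφ : ∀ k, ContDiff ℝ (⊤ : ℕ∞) (φ k))
    (γ : Fin N → ℝ)
    (h : (Fin N → ℝ) → ℝ)
    (hh : ∀ rr : Fin N → ℝ,
      h rr = ∑ k, ∫ s in (γ k)..(rr k), φ k s * ∏ m, (s - rr m) ^ n) :
    ∀ rr : Fin N → ℝ, (∀ i j : Fin N, i ≠ j → rr i ≠ rr j) →
      ∀ i j : Fin N, i ≠ j →
        pd i (fun r' => pd j h r') rr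
          = (-(n : ℝ) / (rr i - rr j)) * (pd i h rr - pd j h rr) := by
  obtain ⟨p, rfl⟩ : ∃ p, n = p + 1 := ⟨n - 1, (Nat.succ_pred_eq_of_pos hn).symm⟩
  intro rr hdist i j hij
  have hφc : ∀ k, Continuous (φ k) := fun k => (hφ k).continuous
  have hd : rr i - rr j ≠ 0 := sub_ne_zero.2 (hdist i j hij)
  have hmemi : i ∈ Finset.univ.erase j := Finset.mem_erase.2 ⟨hij, Finset.mem_univ i⟩
  have hmemj : j ∈ Finset.univ.erase i := Finset.mem_erase.2 ⟨Ne.symm hij, Finset.mem_univ j⟩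
  have hE : (Finset.univ.erase i).erase j = (Finset.univ.erase j).erase i :=
    Finset.erase_right_comm
  have hGc : ∀ k : Fin N, Continuous fun u =>
      φ k u * ((u - rr j) ^ p * ∏ m ∈ (Finset.univ.erase j).erase i, (u - rr m) ^ (p + 1)) :=
    fun k => (hφc k).mul (((continuous_id.sub continuous_const).pow p).mul (cont_prod _ _ _))
  -- the function t ↦ ∂ⱼh at the point rr with i-th coordinate replaced by t
  have hfun2 : (fun t => pd j h (Function.update rr i t))
      = fun t => -((p : ℝ) + 1) * ∑ k, ∫ u in (γ k)..(Function.update rr i t k),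
          (φ k u * ((u - rr j) ^ p
            * ∏ m ∈ (Finset.univ.erase j).erase i, (u - rr m) ^ (p + 1))) * (u - t) ^ (p + 1) := by
    funext t
    rw [pd_h N p φ hφc γ h hh j (Function.update rr i t)]
    congr 1
    apply Finset.sum_congr rfl
    intro k _
    apply intervalIntegral.integral_congr
    intro u _
    have hp2 : ∏ m ∈ Finset.univ.erase j, (u - Function.update rr i t m) ^ (p + 1)
        = (u - t) ^ (p + 1) * ∏ m ∈ (Finset.univ.erase j).erase i, (u - rr m) ^ (p + 1) := by
      rw [← Finset.mul_prod_erase _ _ hmemi, Function.update_self]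
      congr 1
      apply Finset.prod_congr rfl
      intro m hm
      rw [Function.update_of_ne (Finset.ne_of_mem_erase hm)]
    simp only [hp2, Function.update_of_ne (Ne.symm hij)]
    ring
  have hD2 : HasDerivAt (fun t => ∑ k, ∫ u in (γ k)..(Function.update rr i t k),
        (φ k u * ((u - rr j) ^ p * ∏ m ∈ (Finset.univ.erase j).erase i, (u - rr m) ^ (p + 1)))
          * (u - t) ^ (p + 1))
      (∑ k, -((p : ℝ) + 1) * ∫ u in (γ k)..(rr k),
        (φ k u * ((u - rr j) ^ p * ∏ m ∈ (Finset.univ.erase j).erase i, (u - rr m) ^ (p + 1)))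
          * (u - rr i) ^ p) (rr i) := by
    apply HasDerivAt.fun_sum
    intro k _
    by_cases hk : k = i
    · subst hk
      simp only [Function.update_self]
      exact lemA (hGc k) (γ k) p (rr k)
    · simp only [Function.update_of_ne hk]
      exact lemB (hGc k) (γ k) (rr k) p (rr i)
  have hLHS : pd i (fun r' => pd j h r') rr
      = -((p : ℝ) + 1) * ∑ k, -((p : ℝ) + 1) * ∫ u in (γ k)..(rr k),
          (φ k u * ((u - rr j) ^ p * ∏ m ∈ (Finset.univ.erase j).erase i, (u - rr m) ^ (p + 1)))
            * (u - rr i) ^ p := by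
    have h0 : pd i (fun r' => pd j h r') rr
        = deriv (fun t => pd j h (Function.update rr i t)) (rr i) := rfl
    rw [h0, hfun2]
    exact (hD2.const_mul _).deriv
  have hA := pd_h N p φ hφc γ h hh i rr
  have hB := pd_h N p φ hφc γ h hh j rr
  -- pointwise integrand identity
  have hpt : ∀ k : Fin N, ∀ u : ℝ,
      (φ k u * ∏ m ∈ Finset.univ.erase i, (u - rr m) ^ (p + 1)) * (u - rr i) ^ p
        - (φ k u * ∏ m ∈ Finset.univ.erase j, (u - rr m) ^ (p + 1)) * (u - rr j) ^ p
      = (rr i - rr j) * ((φ k u * ((u - rr j) ^ p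
          * ∏ m ∈ (Finset.univ.erase j).erase i, (u - rr m) ^ (p + 1))) * (u - rr i) ^ p) := by
    intro k u
    rw [← Finset.mul_prod_erase (Finset.univ.erase i)
          (fun m => (u - rr m) ^ (p + 1)) hmemj,
        ← Finset.mul_prod_erase (Finset.univ.erase j)
          (fun m => (u - rr m) ^ (p + 1)) hmemi, hE]
    ring
  have hintA : ∀ k : Fin N, IntervalIntegrable
      (fun u => (φ k u * ∏ m ∈ Finset.univ.erase i, (u - rr m) ^ (p + 1)) * (u - rr i) ^ p)
      volume (γ k) (rr k) :=
    fun k => (((hφc k).mul (cont_prod _ _ _)).mul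
      ((continuous_id.sub continuous_const).pow p)).intervalIntegrable _ _
  have hintB : ∀ k : Fin N, IntervalIntegrable
      (fun u => (φ k u * ∏ m ∈ Finset.univ.erase j, (u - rr m) ^ (p + 1)) * (u - rr j) ^ p)
      volume (γ k) (rr k) :=
    fun k => (((hφc k).mul (cont_prod _ _ _)).mul
      ((continuous_id.sub continuous_const).pow p)).intervalIntegrable _ _
  have hdiff : (∑ k, ∫ u in (γ k)..(rr k),
        (φ k u * ∏ m ∈ Finset.univ.erase i, (u - rr m) ^ (p + 1)) * (u - rr i) ^ p)
      - (∑ k, ∫ u in (γ k)..(rr k),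
        (φ k u * ∏ m ∈ Finset.univ.erase j, (u - rr m) ^ (p + 1)) * (u - rr j) ^ p)
      = (rr i - rr j) * ∑ k, ∫ u in (γ k)..(rr k),
          (φ k u * ((u - rr j) ^ p * ∏ m ∈ (Finset.univ.erase j).erase i, (u - rr m) ^ (p + 1)))
            * (u - rr i) ^ p := by
    rw [← Finset.sum_sub_distrib, Finset.mul_sum]
    apply Finset.sum_congr rfl
    intro k _
    rw [← intervalIntegral.integral_sub (hintA k) (hintB k),
      ← intervalIntegral.integral_const_mul]
    apply intervalIntegral.integral_congr
    intro u _
    exact hpt k u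
  rw [hLHS, hA, hB, ← Finset.mul_sum]
  push_cast
  rw [show -((p : ℝ) + 1) * (∑ k, ∫ u in (γ k)..(rr k),
        (φ k u * ∏ m ∈ Finset.univ.erase i, (u - rr m) ^ (p + 1)) * (u - rr i) ^ p)
      - -((p : ℝ) + 1) * (∑ k, ∫ u in (γ k)..(rr k),
        (φ k u * ∏ m ∈ Finset.univ.erase j, (u - rr m) ^ (p + 1)) * (u - rr j) ^ p)
      = -((p : ℝ) + 1) * ((∑ k, ∫ u in (γ k)..(rr k),
        (φ k u * ∏ m ∈ Finset.univ.erase i, (u - rr m) ^ (p + 1)) * (u - rr i) ^ p)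
      - (∑ k, ∫ u in (γ k)..(rr k),
        (φ k u * ∏ m ∈ Finset.univ.erase j, (u - rr m) ^ (p + 1)) * (u - rr j) ^ p)) from by ring,
    hdiff]
  field_simp
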